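/- For the star K_{1,n-1} with n ≥ 3 and e a pendant edge, the cut-edge centrality c(e) = κ(K_{1,n-1}) - κ(Ĝ₁) - κ(Ĝ₂) equals (4n-7)/(4n-6), where Ĝ₁ is the single vertex with a loop (κ = 0) and Ĝ₂ is the star on n-1 vertices with a loop of weight 1 at the center. -/

import Mathlib

open Matrix Polynomial

/-- Kemeny-type sum: `∑ 1/(1-λ)` over the eigenvalues `λ ≠ 1` of `P`. -/
noncomputable def kemeny {n : ℕ} (P : Matrix (Fin n) (Fin n) ℝ) : ℂ :=
  ((((P.map (fun x : ℝ => (x : ℂ))).charpoly.roots).filter (· ≠ 1)).map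
    (fun μ => (1 - μ)⁻¹)).sum

/-- Adjacency matrix of the star `K_{1,n-1}` on `Fin n`, center = last vertex. -/
noncomputable def starA (n : ℕ) : Matrix (Fin n) (Fin n) ℝ :=
  Matrix.of fun i j =>
    if i ≠ j ∧ ((i : ℕ) = n - 1 ∨ (j : ℕ) = n - 1) then 1 else 0

section helpers

lemma my_eval_charpoly {k : ℕ} (M : Matrix (Fin k) (Fin k) ℂ) (x : ℂ) :
    M.charpoly.eval x = (Matrix.of fun i j => (if i = j then x else 0) - M i j).det := by
  rw [Matrix.charpoly, ← Polynomial.coe_evalRingHom, RingHom.map_det]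
  congr 1; ext i j
  simp [charmatrix_apply, Matrix.diagonal_apply, apply_ite (eval x)]


noncomputable def Tm (k : ℕ) (s t : ℂ) : Matrix (Fin k) (Fin k) ℂ :=
  Matrix.of fun i j =>
    if (i : ℕ) = k - 1 then (if j = i then s else t)
    else (if (j : ℕ) = k - 1 then 1 else 0)

lemma det_Tm (k : ℕ) (hk : 2 ≤ k) (s t x : ℂ) (hx : x ≠ 0) :
    (Matrix.of fun i j => (if i = j then x else 0) - Tm k s t i j).det
      = x ^ (k - 2) * (x ^ 2 - s * x - ((k - 1 : ℕ) : ℂ) * t) := by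
  set M := Matrix.of fun i j => (if i = j then x else 0) - Tm k s t i j with hM
  have hk1 : (k - 1) + 1 = k := by omega
  set e : Fin (k-1) ⊕ Fin 1 ≃ Fin k := finSumFinEquiv.trans (finCongr hk1) with he
  have hvl : ∀ i : Fin (k-1), ((e (Sum.inl i)) : ℕ) = (i : ℕ) := by
    intro i; simp [he]
  have hvr : ∀ j : Fin 1, ((e (Sum.inr j)) : ℕ) = k - 1 := by
    intro j; simp [he, Fin.fin_one_eq_zero j]
  have hblock : M.submatrix e e =
      Matrix.fromBlocks (x • (1 : Matrix (Fin (k-1)) (Fin (k-1)) ℂ))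
        (Matrix.of fun _ _ => (-1 : ℂ)) (Matrix.of fun _ _ => -t)
        (Matrix.of fun _ _ => x - s) := by
    ext a b
    cases a with
    | inl i =>
      cases b with
      | inl j =>
        have h1 : ((e (Sum.inl i)) : ℕ) ≠ k - 1 := by rw [hvl]; omega
        have h2 : e (Sum.inl i) = e (Sum.inl j) ↔ i = j := by
          rw [e.apply_eq_iff_eq, Sum.inl.injEq]
        have h3 : ((e (Sum.inl j)) : ℕ) ≠ k - 1 := by rw [hvl]; omega
        simp [hM, Tm, submatrix_apply, h1, h2, h3,
          Matrix.smul_apply, Matrix.one_apply]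
      | inr j =>
        have h1 : ((e (Sum.inl i)) : ℕ) ≠ k - 1 := by rw [hvl]; omega
        have h2 : e (Sum.inl i) ≠ e (Sum.inr j) := by
          simp [e.apply_eq_iff_eq]
        simp [hM, Tm, submatrix_apply, h1, h2, hvr]
    | inr i =>
      cases b with
      | inl j =>
        have h1 : ((e (Sum.inr i)) : ℕ) = k - 1 := hvr i
        have h2 : e (Sum.inr i) ≠ e (Sum.inl j) := by
          simp [e.apply_eq_iff_eq]
        simp [hM, Tm, submatrix_apply, h1, h2, Ne.symm h2]
      | inr j =>
        have h1 : ((e (Sum.inr i)) : ℕ) = k - 1 := hvr i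
        have h2 : e (Sum.inr j) = e (Sum.inr i) := by
          rw [e.apply_eq_iff_eq]; exact congrArg _ (Subsingleton.elim j i)
        simp [hM, Tm, submatrix_apply, h1, h2]
  have hdet := Matrix.det_submatrix_equiv_self e M
  rw [← hdet, hblock]
  have hAright : (x • (1 : Matrix (Fin (k-1)) (Fin (k-1)) ℂ)) * (x⁻¹ • 1) = 1 := by
    simp [smul_smul, mul_inv_cancel₀ hx, inv_mul_cancel₀ hx]
  haveI : Invertible (x • (1 : Matrix (Fin (k-1)) (Fin (k-1)) ℂ)) :=
    ⟨x⁻¹ • 1, by simp [smul_smul, mul_inv_cancel₀ hx, inv_mul_cancel₀ hx], hAright⟩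
  have hinv : (⅟(x • (1 : Matrix (Fin (k-1)) (Fin (k-1)) ℂ))) = x⁻¹ • 1 :=
    invOf_eq_right_inv hAright
  rw [Matrix.det_fromBlocks₁₁, hinv]
  have hdetA : (x • (1 : Matrix (Fin (k-1)) (Fin (k-1)) ℂ)).det = x ^ (k-1) := by
    simp [Matrix.det_smul]
  rw [hdetA, Matrix.det_fin_one]
  simp only [Matrix.sub_apply, Matrix.mul_apply, Matrix.smul_apply, Matrix.one_apply,
    Matrix.of_apply, smul_eq_mul, mul_ite, ite_mul, mul_zero, zero_mul, mul_one,
    Finset.sum_ite_eq', Finset.mem_univ, if_true]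
  rw [Finset.sum_const]
  simp only [Finset.card_univ, Fintype.card_fin, nsmul_eq_mul]
  have hk2 : k - 1 = (k - 2) + 1 := by omega
  rw [hk2, pow_succ]
  push_cast
  field_simp

lemma charpoly_Tm (k : ℕ) (hk : 2 ≤ k) (s t : ℂ) :
    (Tm k s t).charpoly
      = X ^ (k - 2) * (X ^ 2 - C s * X - C (((k - 1 : ℕ) : ℂ) * t)) := by
  have h : (Tm k s t).charpoly
      - (X ^ (k - 2) * (X ^ 2 - C s * X - C (((k - 1 : ℕ) : ℂ) * t))) = 0 := by
    apply Polynomial.eq_zero_of_infinite_isRoot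
    apply ((Set.finite_singleton (0:ℂ)).infinite_compl).mono
    intro x hx
    have hx0 : x ≠ 0 := by simpa using hx
    simp only [Set.mem_setOf_eq, IsRoot, eval_sub, eval_mul, eval_pow, eval_X,
      eval_sub, eval_C, my_eval_charpoly, det_Tm k hk s t x hx0]
    ring
  have := sub_eq_zero.mp h
  exact this

lemma kemeny_sum_calc (k : ℕ) (c : ℂ) (hc : c ≠ 1) :
    (((((X:ℂ[X]) ^ k * ((X - C 1) * (X - C c))).roots.filter (· ≠ 1)).map
      (fun μ => (1 - μ)⁻¹)).sum) = (k : ℂ) + (1 - c)⁻¹ := by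
  have hne : ((X:ℂ[X]) ^ k * ((X - C 1) * (X - C c))) ≠ 0 :=
    ((monic_X_pow k).mul ((monic_X_sub_C (1:ℂ)).mul (monic_X_sub_C c))).ne_zero
  have hne2 : ((X - C (1:ℂ)) * (X - C c)) ≠ 0 :=
    ((monic_X_sub_C (1:ℂ)).mul (monic_X_sub_C c)).ne_zero
  have hroots : ((X:ℂ[X]) ^ k * ((X - C 1) * (X - C c))).roots
      = Multiset.replicate k 0 + ({1} + {c}) := by
    rw [roots_mul hne, roots_mul hne2, roots_pow, roots_X, roots_X_sub_C, roots_X_sub_C,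
      Multiset.nsmul_singleton]
  rw [hroots]
  rw [Multiset.filter_add, Multiset.filter_add]
  have h1 : Multiset.filter (· ≠ 1) (Multiset.replicate k (0:ℂ))
      = Multiset.replicate k 0 := by
    apply Multiset.filter_eq_self.mpr
    intro a ha
    rw [Multiset.eq_of_mem_replicate ha]
    norm_num
  have h2 : Multiset.filter (· ≠ 1) ({1} : Multiset ℂ) = 0 := by
    rw [Multiset.filter_singleton, if_neg (by simp)]
    rfl
  have h3 : Multiset.filter (· ≠ 1) ({c} : Multiset ℂ) = {c} := by
    simp [Multiset.filter_singleton, hc]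
  rw [h1, h2, h3]
  simp [Multiset.map_replicate, Multiset.sum_replicate]



lemma starA_mulVec (n : ℕ) (hn : 2 ≤ n) :
    (starA n).mulVec (fun _ => 1)
      = fun i : Fin n => if (i : ℕ) = n - 1 then ((n - 1 : ℕ) : ℝ) else 1 := by
  funext i
  simp only [Matrix.mulVec, dotProduct, mul_one]
  by_cases hi : (i : ℕ) = n - 1
  · rw [if_pos hi]
    have h1 : ∀ j : Fin n, starA n i j = 1 - (if j = i then 1 else 0) := by
      intro j
      by_cases hj : j = i
      · simp [starA, hj]
      · have : i ≠ j := fun h => hj h.symm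
        simp [starA, this, hi, hj]
    rw [Finset.sum_congr rfl (fun j _ => h1 j), Finset.sum_sub_distrib,
      Finset.sum_const, Finset.sum_ite_eq' Finset.univ i (fun _ => (1:ℝ))]
    simp only [Finset.card_univ, Fintype.card_fin, nsmul_eq_mul, mul_one,
      Finset.mem_univ, if_true]
    have : ((n - 1 : ℕ) : ℝ) = (n : ℝ) - 1 := by
      push_cast [Nat.cast_sub (by omega : 1 ≤ n)]; ring
    rw [this]
  · rw [if_neg hi]
    set c : Fin n := ⟨n - 1, by omega⟩ with hc
    have h1 : ∀ j : Fin n, starA n i j = if j = c then 1 else 0 := by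
      intro j
      by_cases hj : j = c
      · have hij : i ≠ j := by
          intro h; apply hi; rw [h, hj]
        have hic : ¬ i = c := by rw [← hj]; exact hij
        simp [starA, hij, hj, hc, hic]; exact hic
      · have hjv : (j : ℕ) ≠ n - 1 := by
          intro h; apply hj; apply Fin.ext; simp [hc, h]
        simp [starA, hi, hjv, hj]
    rw [Finset.sum_congr rfl (fun j _ => h1 j),
      Finset.sum_ite_eq' Finset.univ c (fun _ => (1:ℝ))]
    simp


lemma P_map_eq (n : ℕ) (hn : 3 ≤ n) :
    (((Matrix.diagonal ((starA n).mulVec (fun _ => 1)))⁻¹ * starA n).map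
      (fun x : ℝ => (x : ℂ)))
      = Tm n 0 (((n - 1 : ℕ) : ℂ))⁻¹ := by
  rw [starA_mulVec n (by omega)]
  set d : Fin n → ℝ := fun i : Fin n => if (i : ℕ) = n - 1 then ((n - 1 : ℕ) : ℝ) else 1
    with hdd
  have hdne : ∀ i, d i ≠ 0 := by
    intro i
    by_cases hi : (i : ℕ) = n - 1 <;> simp [hdd, hi]
    omega
  have hinv : (Matrix.diagonal d)⁻¹ = Matrix.diagonal (fun i => (d i)⁻¹) := by
    apply Matrix.inv_eq_right_inv
    rw [Matrix.diagonal_mul_diagonal]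
    have : (fun i => d i * (d i)⁻¹) = fun _ => (1:ℝ) := by
      funext i; exact mul_inv_cancel₀ (hdne i)
    rw [this, Matrix.diagonal_one]
  rw [hinv]
  ext i j
  rw [Matrix.map_apply, Matrix.diagonal_mul, Tm]
  by_cases hi : (i : ℕ) = n - 1
  · by_cases hj : j = i
    · simp [starA, hj, hi, hdd]
    · have hij : i ≠ j := fun h => hj h.symm
      simp [starA, hi, hj, hij, hdd]
  · have hd : (if (i : ℕ) = n - 1 then ((n - 1 : ℕ) : ℝ) else 1) = 1 := if_neg hi
    by_cases hj : (j : ℕ) = n - 1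
    · have hij : i ≠ j := by intro h; rw [h] at hi; exact hi hj
      simp [starA, hi, hj, hij, hdd]
    · simp [starA, hi, hj, hdd]

lemma P2_map_eq (n : ℕ) (hn : 3 ≤ n) :
    (((Matrix.diagonal ((starA (n-1) + Matrix.single (⟨n-2, Nat.sub_lt_sub_left (by omega) (by omega)⟩ : Fin (n-1))
        (⟨n-2, Nat.sub_lt_sub_left (by omega) (by omega)⟩ : Fin (n-1)) (1:ℝ)).mulVec (fun _ => 1)))⁻¹
      * (starA (n-1) + Matrix.single (⟨n-2, Nat.sub_lt_sub_left (by omega) (by omega)⟩ : Fin (n-1))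
        (⟨n-2, Nat.sub_lt_sub_left (by omega) (by omega)⟩ : Fin (n-1)) (1:ℝ))).map (fun x : ℝ => (x : ℂ)))
      = Tm (n-1) (((n - 1 : ℕ) : ℂ))⁻¹ (((n - 1 : ℕ) : ℂ))⁻¹ := by
  set cm : Fin (n-1) := ⟨n-2, by omega⟩ with hcm
  set B := starA (n-1) + Matrix.single cm cm (1:ℝ) with hB
  have hicm : ∀ i : Fin (n-1), i = cm ↔ (i : ℕ) = n-1-1 := by
    intro i
    constructor
    · intro h; rw [h, hcm]; simp; omega
    · intro h; apply Fin.ext; rw [hcm]; simp; omega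
  have hstd : ∀ i j : Fin (n-1), Matrix.single cm cm (1:ℝ) i j
      = if cm = i ∧ cm = j then 1 else 0 := by
    intro i j; rfl
  have hd : B.mulVec (fun _ => 1)
      = fun i : Fin (n-1) => if (i : ℕ) = n-1-1 then ((n - 1 : ℕ) : ℝ) else 1 := by
    rw [hB, Matrix.add_mulVec, starA_mulVec (n-1) (by omega)]
    funext i
    have hstd2 : (Matrix.single cm cm (1:ℝ)).mulVec (fun _ => 1) i
        = if (i : ℕ) = n-1-1 then 1 else 0 := by
      simp only [Matrix.mulVec, dotProduct, mul_one]
      rw [Finset.sum_congr rfl (fun j _ => hstd i j)]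
      by_cases hi : i = cm
      · rw [if_pos ((hicm i).mp hi)]
        subst hi
        simp [Finset.sum_ite_eq' Finset.univ cm (fun _ => (1:ℝ))]
      · rw [if_neg (fun h => hi ((hicm i).mpr h))]
        have : ∀ j : Fin (n-1), (if cm = i ∧ cm = j then (1:ℝ) else 0) = 0 := by
          intro j
          rw [if_neg]
          rintro ⟨h1, -⟩; exact hi h1.symm
        rw [Finset.sum_congr rfl (fun j _ => this j), Finset.sum_const_zero]
    rw [Pi.add_apply, hstd2]
    by_cases hi : (i : ℕ) = n-1-1
    · rw [if_pos hi, if_pos hi, if_pos hi]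
      have h1 : ((n-1-1 : ℕ) : ℝ) + 1 = ((n - 1 : ℕ) : ℝ) := by
        push_cast [Nat.cast_sub (by omega : 1 ≤ n), Nat.cast_sub (by omega : 1 ≤ n - 1)]
        ring
      rw [← h1]
    · rw [if_neg hi, if_neg hi, if_neg hi, add_zero]
  rw [hd]
  set d : Fin (n-1) → ℝ :=
    fun i : Fin (n-1) => if (i : ℕ) = n-1-1 then ((n - 1 : ℕ) : ℝ) else 1 with hdd
  have hdne : ∀ i, d i ≠ 0 := by
    intro i
    by_cases hi : (i : ℕ) = n-1-1 <;> simp [hdd, hi]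
    omega
  have hinv : (Matrix.diagonal d)⁻¹ = Matrix.diagonal (fun i => (d i)⁻¹) := by
    apply Matrix.inv_eq_right_inv
    rw [Matrix.diagonal_mul_diagonal]
    have : (fun i => d i * (d i)⁻¹) = fun _ => (1:ℝ) := by
      funext i; exact mul_inv_cancel₀ (hdne i)
    rw [this, Matrix.diagonal_one]
  rw [hinv]
  ext i j
  rw [Matrix.map_apply, Matrix.diagonal_mul, Tm]
  by_cases hi : (i : ℕ) = n-1-1
  · have hicm' : i = cm := (hicm i).mpr hi
    have hentry : B i j = 1 := by
      rw [hB, Matrix.add_apply, hstd i j]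
      by_cases hj : cm = j
      · have hij : i = j := by rw [hicm', hj]
        have h0 : starA (n-1) i j = 0 := by
          rw [starA]
          simp only [Matrix.of_apply]
          rw [if_neg (by rintro ⟨h1, -⟩; exact h1 hij)]
        rw [h0, if_pos ⟨hicm' ▸ rfl, hj⟩, zero_add]
      · have hij : i ≠ j := by rw [hicm']; exact fun h => hj h
        have h1 : starA (n-1) i j = 1 := by
          rw [starA]
          simp only [Matrix.of_apply]
          rw [if_pos ⟨hij, Or.inl hi⟩]
        rw [h1, if_neg (fun h => hj h.2), add_zero]
    simp only [Matrix.of_apply, hi, if_true, hdd, hentry]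
    split <;> push_cast <;> ring
  · have hicm' : i ≠ cm := fun h => hi ((hicm i).mp h)
    have hstd0 : Matrix.single cm cm (1:ℝ) i j = 0 := by
      rw [hstd, if_neg]; rintro ⟨h1, -⟩; exact hicm' h1.symm
    have hentry : B i j = if (j : ℕ) = n-1-1 then (1:ℝ) else 0 := by
      rw [hB, Matrix.add_apply, hstd0, add_zero, starA]
      by_cases hj : (j : ℕ) = n-1-1
      · have hij : i ≠ j := by
          intro h; rw [h] at hi; exact hi hj
        simp only [Matrix.of_apply]
        rw [if_pos ⟨hij, Or.inr hj⟩, if_pos hj]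
      · simp only [Matrix.of_apply]
        rw [if_neg (by rintro ⟨-, h | h⟩ <;> omega), if_neg hj]
    simp only [Matrix.of_apply, hi, if_false, hdd, hentry]
    split <;> simp

end helpers

theorem star_centrality {n : ℕ} (hn : 3 ≤ n)
    (P : Matrix (Fin n) (Fin n) ℝ)
    (hP : P = (Matrix.diagonal ((starA n).mulVec (fun _ => 1)))⁻¹ * starA n)
    -- `Ĝ₁`: the single vertex `1` with a unit loop
    (A₁ : Matrix (Fin 1) (Fin 1) ℝ) (hA₁ : A₁ = Matrix.of fun _ _ => 1)
    -- `Ĝ₂`: the star on `n-1` vertices with a unit loop at its center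
    (A₂ : Matrix (Fin (n - 1)) (Fin (n - 1)) ℝ)
    (hA₂ : A₂ = starA (n - 1) +
      Matrix.single ⟨n - 2, by omega⟩ ⟨n - 2, by omega⟩ 1) :
    kemeny P
      - kemeny ((Matrix.diagonal (A₁.mulVec (fun _ => 1)))⁻¹ * A₁)
      - kemeny ((Matrix.diagonal (A₂.mulVec (fun _ => 1)))⁻¹ * A₂)
      = (((4 * n - 7) / (4 * n - 6) : ℝ) : ℂ) := by
  have hne : ((n - 1 : ℕ) : ℂ) ≠ 0 := Nat.cast_ne_zero.mpr (by omega)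
  set a : ℂ := ((n - 1 : ℕ) : ℂ) with ha
  set b : ℂ := ((n - 2 : ℕ) : ℂ) with hb
  set c : ℂ := -(b * a⁻¹) with hc
  have hab : a = b + 1 := by
    rw [ha, hb]
    norm_cast
    omega
  have h1c : (1 : ℂ) + c = a⁻¹ := by
    rw [hc]
    field_simp
    linear_combination hab
  -- Part 1 : kemeny P
  have hk1 : kemeny P = ((n - 2 : ℕ) : ℂ) + (1 - (-1))⁻¹ := by
    unfold kemeny
    rw [hP, P_map_eq n hn, charpoly_Tm n (by omega)]
    have hq : (X : ℂ[X]) ^ 2 - C 0 * X - C (((n - 1 : ℕ) : ℂ) * ((n - 1 : ℕ) : ℂ)⁻¹)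
        = (X - C 1) * (X - C (-1)) := by
      rw [mul_inv_cancel₀ hne, C_0, C_1, C_neg, C_1]
      ring
    rw [hq, kemeny_sum_calc (n - 2) (-1) (by norm_num)]
  -- Part 2 : kemeny of the singleton
  have hk2 : kemeny ((Matrix.diagonal (A₁.mulVec (fun _ => 1)))⁻¹ * A₁) = 0 := by
    have hmv : A₁.mulVec (fun _ => 1) = fun _ => (1 : ℝ) := by
      funext i
      simp [hA₁, Matrix.mulVec, dotProduct]
    rw [hmv]
    have : Matrix.diagonal (fun _ : Fin 1 => (1:ℝ)) = 1 := Matrix.diagonal_one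
    rw [this, inv_one, one_mul]
    unfold kemeny
    have hch : ((A₁.map (fun x : ℝ => (x : ℂ)))).charpoly = X - C 1 := by
      rw [Matrix.charpoly, Matrix.det_fin_one]
      rw [charmatrix_apply_eq]
      simp [hA₁]
    rw [hch, roots_X_sub_C]
    rw [Multiset.filter_singleton, if_neg (by simp)]
    rfl
  -- Part 3 : kemeny of the looped star
  have hc1 : c ≠ 1 := by
    intro hcc
    have h2 : (2 : ℂ) = a⁻¹ := by rw [← h1c, hcc]; norm_num
    have h3 : a * 2 = 1 := by rw [h2, mul_inv_cancel₀ hne]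
    have h4 : ((n - 1 : ℕ) : ℂ) * 2 = 1 := by rw [← ha]; exact h3
    have h5 : (((n - 1) * 2 : ℕ) : ℂ) = ((1 : ℕ) : ℂ) := by push_cast; exact h4
    have h6 : (n - 1) * 2 = 1 := Nat.cast_injective h5
    omega
  have hk3 : kemeny ((Matrix.diagonal (A₂.mulVec (fun _ => 1)))⁻¹ * A₂)
      = ((n - 1 - 2 : ℕ) : ℂ) + (1 - c)⁻¹ := by
    unfold kemeny
    rw [hA₂, P2_map_eq n hn, charpoly_Tm (n-1) (by omega)]
    have hq : (X : ℂ[X]) ^ 2 - C (((n - 1 : ℕ) : ℂ))⁻¹ * X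
        - C (((n - 1 - 1 : ℕ) : ℂ) * (((n - 1 : ℕ) : ℂ))⁻¹)
        = (X - C 1) * (X - C c) := by
      have hbb : ((n - 1 - 1 : ℕ) : ℂ) = b := by rw [hb]; norm_cast
      rw [hbb, ← ha]
      have h2 : b * a⁻¹ = -c := by rw [hc]; ring
      rw [h2, ← h1c, C_neg, C_add, C_1]
      ring
    rw [hq, kemeny_sum_calc (n - 1 - 2) c hc1]
  rw [hk1, hk2, hk3]
  -- final arithmetic
  have hcast2 : ((n - 2 : ℕ) : ℂ) = (n : ℂ) - 2 := by
    push_cast [Nat.cast_sub (by omega : 2 ≤ n)]; ring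
  have hcast3 : ((n - 1 - 2 : ℕ) : ℂ) = (n : ℂ) - 3 := by
    have : n - 1 - 2 = n - 3 := by omega
    rw [this]; push_cast [Nat.cast_sub (by omega : 3 ≤ n)]; ring
  have hcasta : a = (n : ℂ) - 1 := by
    rw [ha]; push_cast [Nat.cast_sub (by omega : 1 ≤ n)]; ring
  have hcastb : b = (n : ℂ) - 2 := by
    rw [hb]; push_cast [Nat.cast_sub (by omega : 2 ≤ n)]; ring
  have hN1 : (n : ℂ) - 1 ≠ 0 := by rw [← hcasta]; exact hne
  have hN3 : 2 * (n : ℂ) - 3 ≠ 0 := by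
    have h0 : ((2 * n - 3 : ℕ) : ℂ) = 2 * (n : ℂ) - 3 := by
      push_cast [Nat.cast_sub (by omega : 3 ≤ 2 * n)]; ring
    rw [← h0]
    exact Nat.cast_ne_zero.mpr (by omega)
  have h1mc : (1 : ℂ) - c = (2 * (n : ℂ) - 3) / ((n : ℂ) - 1) := by
    rw [hc, hcasta, hcastb]
    field_simp
    ring
  have hN6 : 4 * (n : ℂ) - 6 ≠ 0 := by
    have h0 : 4 * (n : ℂ) - 6 = 2 * (2 * (n : ℂ) - 3) := by ring
    rw [h0]
    exact mul_ne_zero two_ne_zero hN3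
  rw [hcast2, hcast3, h1mc]
  push_cast
  rw [inv_div]
  rw [eq_div_iff hN6]
  have key : ((n : ℂ) - 1) / (2 * (n : ℂ) - 3) * (2 * (n : ℂ) - 3) = (n : ℂ) - 1 :=
    div_mul_cancel₀ _ hN3
  linear_combination (-2) * key
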